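/- For any matrix M ∈ ℝ^{m×n} with singular value decomposition M = U D Vᵀ, D = diag(r₁,…,r_k) with r₁ ≥ ⋯ ≥ r_k ≥ 0, the matrix M' = U diag(r₁,…,r_{k−1},0) Vᵀ is a closest matrix to M in Frobenius norm among matrices of rank at most k−1, and ‖M − M'‖_F = r_k. -/
import Mathlib


open Matrix

/-- Frobenius norm of a real matrix. -/
noncomputable def frobNorm {m n : ℕ} (M : Matrix (Fin m) (Fin n) ℝ) : ℝ :=
  Real.sqrt (∑ i, ∑ j, (M i j) ^ 2)


lemma frob_sq_eq_trace {m n : ℕ} (A : Matrix (Fin m) (Fin n) ℝ) :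
    ∑ i, ∑ j, (A i j) ^ 2 = (A.transpose * A).trace := by
  rw [Matrix.trace, Finset.sum_comm]
  simp [Matrix.diag, Matrix.mul_apply, sq]

/-- sum of squares of entries of U * diagonal d * Vᵀ is ∑ d². -/
lemma frob_sq_svd {m n k : ℕ}
    (U : Matrix (Fin m) (Fin k) ℝ) (V : Matrix (Fin n) (Fin k) ℝ)
    (hU : U.transpose * U = 1) (hV : V.transpose * V = 1) (d : Fin k → ℝ) :
    ∑ i, ∑ j, ((U * Matrix.diagonal d * V.transpose) i j) ^ 2 = ∑ i, d i ^ 2 := by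
  rw [frob_sq_eq_trace]
  have h1 : (U * Matrix.diagonal d * V.transpose).transpose
      = V * Matrix.diagonal d * U.transpose := by
    simp [Matrix.transpose_mul, Matrix.diagonal_transpose, Matrix.mul_assoc]
  rw [h1]
  have h2 : V * Matrix.diagonal d * U.transpose * (U * Matrix.diagonal d * V.transpose)
      = V * (Matrix.diagonal (fun i => d i * d i) * V.transpose) := by
    simp only [Matrix.mul_assoc]
    rw [← Matrix.mul_assoc U.transpose U, hU, Matrix.one_mul,
      ← Matrix.mul_assoc (Matrix.diagonal d), Matrix.diagonal_mul_diagonal]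
  rw [h2, Matrix.trace_mul_comm, Matrix.mul_assoc, hV,
    Matrix.mul_one, Matrix.trace_diagonal]
  exact Finset.sum_congr rfl fun i _ => (sq (d i)).symm

/-- Eckart–Young: dropping the smallest singular value yields a closest matrix of
rank at most k−1 in Frobenius norm, with distance r_k. -/
theorem eckart_young_drop_smallest {m n k : ℕ}
    (U : Matrix (Fin m) (Fin (k + 1)) ℝ) (V : Matrix (Fin n) (Fin (k + 1)) ℝ)
    (hU : U.transpose * U = 1) (hV : V.transpose * V = 1)
    (r : Fin (k + 1) → ℝ) (hr : ∀ i j : Fin (k + 1), i ≤ j → r j ≤ r i)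
    (hpos : 0 ≤ r (Fin.last k))
    (M : Matrix (Fin m) (Fin n) ℝ)
    (hM : M = U * Matrix.diagonal r * V.transpose)
    (M' : Matrix (Fin m) (Fin n) ℝ)
    (hM' : M' = U * Matrix.diagonal (fun i => if i = Fin.last k then 0 else r i) *
        V.transpose) :
    M'.rank ≤ k ∧ frobNorm (M - M') = r (Fin.last k) ∧
      ∀ B : Matrix (Fin m) (Fin n) ℝ, B.rank ≤ k →
        frobNorm (M - M') ≤ frobNorm (M - B) := by
  set d' : Fin (k + 1) → ℝ := fun i => if i = Fin.last k then 0 else r i with hd'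
  set e : Fin (k + 1) → ℝ := fun i => if i = Fin.last k then r i else 0 with he
  -- M - M' = U * diagonal e * Vᵀ
  have hde : Matrix.diagonal r - Matrix.diagonal d' = Matrix.diagonal e := by
    funext i j
    by_cases h : i = j
    · subst h
      by_cases h2 : i = Fin.last k <;>
        simp [Matrix.sub_apply, Matrix.diagonal_apply_eq, he, hd', h2]
    · simp [Matrix.sub_apply, Matrix.diagonal_apply_ne _ h]
  have hdiff : M - M' = U * Matrix.diagonal e * V.transpose := by
    rw [hM, hM', ← Matrix.sub_mul, ← Matrix.mul_sub, hde]
  -- frobNorm (M - M') = r (last k)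
  have hsum_e : ∑ i, e i ^ 2 = r (Fin.last k) ^ 2 := by
    rw [Finset.sum_eq_single (Fin.last k)]
    · simp [he]
    · intro b _ hb; simp [he, hb]
    · simp
  have hfrob : frobNorm (M - M') = r (Fin.last k) := by
    rw [frobNorm, hdiff, frob_sq_svd U V hU hV e, hsum_e, Real.sqrt_sq hpos]
  refine ⟨?_, hfrob, ?_⟩
  · -- rank
    rw [hM']
    calc (U * Matrix.diagonal d' * V.transpose).rank
        ≤ (U * Matrix.diagonal d').rank := le_trans (Matrix.rank_mul_le _ _) inf_le_left
      _ ≤ (Matrix.diagonal d').rank := le_trans (Matrix.rank_mul_le _ _) inf_le_right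
      _ ≤ k := by
          rw [Matrix.rank_diagonal]
          calc Fintype.card { i : Fin (k+1) // d' i ≠ 0 }
              ≤ Fintype.card { i : Fin (k+1) // i ≠ Fin.last k } :=
                Fintype.card_le_of_injective
                  (fun p => ⟨p.1, fun h => p.2 (by simp [hd', h])⟩)
                  (by intro a b hab; exact Subtype.ext (Subtype.mk_eq_mk.mp hab))
            _ = k := by simp [Fintype.card_subtype_compl]
  · -- optimality
    intro B hB
    -- find nonzero c with (B * V) *ᵥ c = 0
    have hrankBV : (B * V).rank < k + 1 := by
      have := le_trans (Matrix.rank_mul_le B V) inf_le_left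
      omega
    obtain ⟨c, hc0, hcker⟩ : ∃ c : Fin (k+1) → ℝ, c ≠ 0 ∧ (B * V) *ᵥ c = 0 := by
      have hker : LinearMap.ker (B * V).mulVecLin ≠ ⊥ := by
        intro h
        have := LinearMap.finrank_range_add_finrank_ker (B * V).mulVecLin
        rw [h, finrank_bot] at this
        simp only [Module.finrank_fin_fun] at this
        have hrk : (B * V).rank = Module.finrank ℝ (LinearMap.range (B * V).mulVecLin) := rfl
        omega
      obtain ⟨c, hc, hc0⟩ := Submodule.exists_mem_ne_zero_of_ne_bot hker
      exact ⟨c, hc0, hc⟩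
    set x : Fin n → ℝ := V *ᵥ c with hx
    have hBx : B *ᵥ x = 0 := by rw [hx, Matrix.mulVec_mulVec, hcker]
    -- ∑ x² = ∑ c²
    have hxx : ∑ j, x j ^ 2 = ∑ i, c i ^ 2 := by
      have h1 : ∑ j, x j ^ 2 = x ⬝ᵥ x := by
        simp [dotProduct, sq]
      have h3 : x ᵥ* V = c := by
        have h4 : x ᵥ* V = V.transpose *ᵥ x := (Matrix.mulVec_transpose V x).symm
        rw [h4, hx, Matrix.mulVec_mulVec, hV, Matrix.one_mulVec]
      have h2 : x ⬝ᵥ x = c ⬝ᵥ c := by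
        conv_lhs => rw [hx]
        rw [Matrix.dotProduct_mulVec, h3]
      rw [h1, h2]
      simp [dotProduct, sq]
    -- M *ᵥ x = (U * diagonal r) *ᵥ c
    have hMx : M *ᵥ x = (U * Matrix.diagonal r) *ᵥ c := by
      rw [hx, Matrix.mulVec_mulVec, hM, Matrix.mul_assoc (U * Matrix.diagonal r), hV,
        Matrix.mul_one]
    -- ∑ (M *ᵥ x)² = ∑ r² c²
    have hMx2 : ∑ i, (M *ᵥ x) i ^ 2 = ∑ i, r i ^ 2 * c i ^ 2 := by
      have h1 : ∑ i, (M *ᵥ x) i ^ 2 = (M *ᵥ x) ⬝ᵥ (M *ᵥ x) := by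
        simp [dotProduct, sq]
      rw [h1, hMx]
      have h2 : ((U * Matrix.diagonal r) *ᵥ c) ⬝ᵥ ((U * Matrix.diagonal r) *ᵥ c)
          = (((U * Matrix.diagonal r) *ᵥ c) ᵥ* (U * Matrix.diagonal r)) ⬝ᵥ c :=
        Matrix.dotProduct_mulVec _ _ _
      have h3 : ((U * Matrix.diagonal r) *ᵥ c) ᵥ* (U * Matrix.diagonal r)
          = (Matrix.diagonal fun i => r i * r i) *ᵥ c := by
        rw [← Matrix.mulVec_transpose, Matrix.mulVec_mulVec]
        rw [Matrix.transpose_mul, Matrix.diagonal_transpose, Matrix.mul_assoc,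
          ← Matrix.mul_assoc U.transpose, hU, Matrix.one_mul, Matrix.diagonal_mul_diagonal]
      rw [h2, h3]
      simp only [dotProduct, Matrix.mulVec_diagonal]
      exact Finset.sum_congr rfl fun i _ => by ring
    -- lower bound: r_k² ∑ c² ≤ ∑ r² c²
    have hlow : r (Fin.last k) ^ 2 * ∑ i, c i ^ 2 ≤ ∑ i, r i ^ 2 * c i ^ 2 := by
      rw [Finset.mul_sum]
      refine Finset.sum_le_sum fun i _ => ?_
      have hri : r (Fin.last k) ≤ r i := hr i (Fin.last k) (Fin.le_last i)
      have : r (Fin.last k) ^ 2 ≤ r i ^ 2 := by nlinarith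
      nlinarith [sq_nonneg (c i)]
    -- Cauchy-Schwarz: ∑ ((M-B) *ᵥ x)² ≤ (∑∑ (M-B)²) * ∑ x²
    set S : ℝ := ∑ i, ∑ j, ((M - B) i j) ^ 2 with hS
    have hCS : ∑ i, ((M - B) *ᵥ x) i ^ 2 ≤ S * ∑ j, x j ^ 2 := by
      rw [hS, Finset.sum_mul]
      refine Finset.sum_le_sum fun i _ => ?_
      exact Finset.sum_mul_sq_le_sq_mul_sq Finset.univ (fun j => (M - B) i j) x
    have hMBx : (M - B) *ᵥ x = M *ᵥ x := by
      rw [Matrix.sub_mulVec, hBx, sub_zero]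
    -- combine
    have hT : 0 < ∑ i, c i ^ 2 := by
      have h0 : ∑ i, c i ^ 2 ≠ 0 := by
        intro h
        apply hc0
        funext i
        have := (Finset.sum_eq_zero_iff_of_nonneg (fun i _ => sq_nonneg (c i))).mp h i
          (Finset.mem_univ i)
        exact pow_eq_zero_iff (by norm_num) |>.mp this
      positivity
    have hkey : r (Fin.last k) ^ 2 ≤ S := by
      have h1 : r (Fin.last k) ^ 2 * ∑ i, c i ^ 2 ≤ S * ∑ i, c i ^ 2 := by
        calc r (Fin.last k) ^ 2 * ∑ i, c i ^ 2 ≤ ∑ i, r i ^ 2 * c i ^ 2 := hlow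
          _ = ∑ i, (M *ᵥ x) i ^ 2 := hMx2.symm
          _ = ∑ i, ((M - B) *ᵥ x) i ^ 2 := by rw [hMBx]
          _ ≤ S * ∑ j, x j ^ 2 := hCS
          _ = S * ∑ i, c i ^ 2 := by rw [hxx]
      exact le_of_mul_le_mul_right h1 hT
    rw [hfrob, frobNorm, ← hS]
    calc r (Fin.last k) = Real.sqrt (r (Fin.last k) ^ 2) := (Real.sqrt_sq hpos).symm
      _ ≤ Real.sqrt S := Real.sqrt_le_sqrt hkey
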